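/- Let f ∈ ℓ¹(ℤ) = L¹(ℤ) (ℤ with counting measure) and let Ψ_f : ℓ²(ℤ) → ℓ²(ℤ) be the convolution operator Ψ_f(φ)(x) = Σ_{y∈ℤ} f(x−y)·φ(y). Then the operator norm of Ψ_f equals the supremum norm of the Fourier transform of f: ‖Ψ_f‖ = sup_{α∈[0,1)} |Σ_{n∈ℤ} f(n)·e^{−2πinα}|. -/

import Mathlib

open Real Complex
open scoped ENNReal

noncomputable section Aux

open MeasureTheory AddCircle

private instance fact01 : Fact ((0:ℝ) < 1) := ⟨one_pos⟩

private lemma norm_fourier_apply (n : ℤ) (x : AddCircle (1:ℝ)) : ‖fourier n x‖ = 1 := by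
  rw [fourier_apply, Circle.norm_coe]

private lemma summable_g (f : ℤ → ℂ) (hf : Summable fun n => ‖f n‖) :
    Summable fun n : ℤ => f n • fourier n (T := (1:ℝ)) := by
  apply Summable.of_norm
  refine hf.congr fun n => ?_
  rw [norm_smul, fourier_norm, mul_one]

/-- the Fourier series of `f` as a continuous function on the circle -/
private def gfun (f : ℤ → ℂ) : C(AddCircle (1:ℝ), ℂ) := ∑' n : ℤ, f n • fourier n

private lemma gfun_apply (f : ℤ → ℂ) (hf : Summable fun n => ‖f n‖) (θ : AddCircle (1:ℝ)) :
    gfun f θ = ∑' n : ℤ, f n * fourier n θ := by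
  have h1 := (summable_g f hf).hasSum
  have h2 := ((ContinuousMap.evalCLM ℂ θ).hasSum h1)
  simpa [gfun, ContinuousMap.evalCLM, smul_eq_mul] using h2.tsum_eq.symm

end Aux

noncomputable section Aux2
open MeasureTheory AddCircle

private lemma key_coeff (f : ℤ → ℂ) (hf : Summable fun n => ‖f n‖)
    (h : Lp ℂ 2 (haarAddCircle (T := 1))) (x : ℤ) :
    fourierCoeff (fun t => gfun f t * h t) x
      = ∑' n : ℤ, f n * fourierCoeff (⇑h) (x - n) := by
  have hint : Integrable (⇑h) haarAddCircle := (Lp.memLp h).integrable one_le_two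
  have hFint : ∀ n : ℤ, Integrable
      (fun t => fourier (-x) t * (f n * fourier n t * h t)) haarAddCircle := by
    intro n
    have := hint.bdd_mul (f := fun t => fourier (-x) t * (f n * fourier n t))
      (((fourier (-x)).continuous.mul (((fourier n).continuous.const_smul (f n)))).aestronglyMeasurable)
      (Filter.Eventually.of_forall (fun t => show _ ≤ ‖f n‖ by
        simp [norm_mul, norm_fourier_apply, Circle.norm_coe]))
    simpa [mul_assoc] using this
  have hpt : ∀ t, fourier (-x) t • (gfun f t * h t)
      = ∑' n : ℤ, fourier (-x) t * (f n * fourier n t * h t) := by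
    intro t
    rw [gfun_apply f hf t, smul_eq_mul, ← tsum_mul_right, ← tsum_mul_left]
  have hsum : Summable fun n : ℤ =>
      ∫ t, ‖fourier (-x) t * (f n * fourier n t * h t)‖ ∂(haarAddCircle (T := 1)) := by
    refine Summable.of_nonneg_of_le (fun n => integral_nonneg fun t => norm_nonneg _)
      (fun n => ?_) (hf.mul_right (∫ t, ‖h t‖ ∂(haarAddCircle (T := 1))))
    rw [← integral_const_mul]
    refine integral_mono_of_nonneg (Filter.Eventually.of_forall fun t => norm_nonneg _)
      (hint.norm.const_mul _) (Filter.Eventually.of_forall fun t => ?_)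
    simp [norm_mul, norm_fourier_apply, Circle.norm_coe]
  calc fourierCoeff (fun t => gfun f t * h t) x
      = ∫ t, fourier (-x) t • (gfun f t * h t) ∂haarAddCircle := rfl
    _ = ∫ t, ∑' n : ℤ, fourier (-x) t * (f n * fourier n t * h t) ∂haarAddCircle := by
        simp_rw [hpt]
    _ = ∑' n : ℤ, ∫ t, fourier (-x) t * (f n * fourier n t * h t) ∂haarAddCircle :=
        (integral_tsum_of_summable_integral_norm hFint hsum).symm
    _ = ∑' n : ℤ, f n * fourierCoeff (⇑h) (x - n) := by
        refine tsum_congr fun n => ?_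
        rw [fourierCoeff]
        rw [← integral_const_mul]
        refine integral_congr_ae (Filter.Eventually.of_forall fun t => ?_)
        have : fourier (-(x - n)) t = fourier (-x) t * fourier n t := by
          rw [← fourier_add]; ring_nf
        simp only [smul_eq_mul, this]; ring

end Aux2

noncomputable section Aux3
open MeasureTheory AddCircle

private lemma memGH (f : ℤ → ℂ) (h : Lp ℂ 2 (haarAddCircle (T := 1))) :
    MemLp (fun t => gfun f t * h t) 2 (haarAddCircle (T := 1)) := by
  refine MemLp.of_le_mul (c := ‖gfun f‖) (Lp.memLp h)
    ((gfun f).continuous.aestronglyMeasurable.mul (Lp.aestronglyMeasurable h))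
    (Filter.Eventually.of_forall fun t => ?_)
  rw [norm_mul]
  exact mul_le_mul_of_nonneg_right ((gfun f).norm_coe_le_norm t) (norm_nonneg _)

private lemma norm_Mg_le (f : ℤ → ℂ) (h : Lp ℂ 2 (haarAddCircle (T := 1))) :
    ‖(memGH f h).toLp _‖ ≤ ‖gfun f‖ * ‖h‖ := by
  rw [Lp.norm_toLp]
  have h1 : eLpNorm (fun t => gfun f t * h t) 2 (haarAddCircle (T := 1))
      ≤ eLpNorm ((‖gfun f‖ : ℝ) • ⇑h) 2 (haarAddCircle (T := 1)) := by
    apply eLpNorm_mono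
    intro t
    simp only [Pi.smul_apply, norm_smul, norm_mul, Real.norm_eq_abs,
      _root_.abs_of_nonneg (norm_nonneg (gfun f))]
    exact mul_le_mul_of_nonneg_right ((gfun f).norm_coe_le_norm t) (norm_nonneg _)
  rw [eLpNorm_const_smul] at h1
  have h2 := ENNReal.toReal_mono (by
    simp [ENNReal.mul_ne_top, Lp.eLpNorm_ne_top h]) h1
  rw [ENNReal.toReal_mul] at h2
  simpa [Lp.norm_def, Real.norm_eq_abs, _root_.abs_of_nonneg (norm_nonneg (gfun f))] using h2

private lemma norm_Mg_ge (f : ℤ → ℂ) {S : Set (AddCircle (1:ℝ))} (hSm : MeasurableSet S)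
    (hμS : haarAddCircle S ≠ ⊤) (c : ℝ) (hc : 0 ≤ c)
    (hcS : ∀ t ∈ S, c ≤ ‖gfun f t‖) :
    c * ‖indicatorConstLp 2 hSm hμS (1:ℂ)‖ ≤ ‖(memGH f (indicatorConstLp 2 hSm hμS (1:ℂ))).toLp _‖ := by
  set h₀ := indicatorConstLp 2 hSm hμS (1:ℂ)
  rw [Lp.norm_toLp, Lp.norm_def]
  have h1 : eLpNorm ((c : ℝ) • ⇑h₀) 2 (haarAddCircle (T := 1))
      ≤ eLpNorm (fun t => gfun f t * h₀ t) 2 (haarAddCircle (T := 1)) := by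
    apply eLpNorm_mono_ae
    filter_upwards [indicatorConstLp_coeFn (p := 2) (hs := hSm) (hμs := hμS) (c := (1:ℂ))] with t ht
    change (h₀ : AddCircle (1:ℝ) → ℂ) t = _ at ht
    simp only [Pi.smul_apply, norm_smul, norm_mul, Real.norm_eq_abs, _root_.abs_of_nonneg hc, ht]
    by_cases hts : t ∈ S
    · simp only [Set.indicator_of_mem hts]
      exact mul_le_mul_of_nonneg_right (hcS t hts) (norm_nonneg _)
    · simp [Set.indicator_of_notMem hts]
  rw [eLpNorm_const_smul] at h1
  have h2 := ENNReal.toReal_mono ((memGH f h₀).eLpNorm_ne_top) h1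
  rw [ENNReal.toReal_mul] at h2
  simpa [Lp.norm_def, Real.norm_eq_abs, _root_.abs_of_nonneg hc] using h2

end Aux3

noncomputable section Main
open MeasureTheory AddCircle

theorem opNorm_convolution_int_eq_sup_fourier
    (f : ℤ → ℂ) (hf : Summable fun n => ‖f n‖)
    (T : lp (fun _ : ℤ => ℂ) 2 →L[ℂ] lp (fun _ : ℤ => ℂ) 2)
    (hT : ∀ (φ : lp (fun _ : ℤ => ℂ) 2) (x : ℤ),
      (T φ : ∀ _ : ℤ, ℂ) x = ∑' y : ℤ, f (x - y) * (φ : ∀ _ : ℤ, ℂ) y) :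
    ‖T‖ = ⨆ α : Set.Ico (0 : ℝ) 1,
      ‖∑' n : ℤ, f n * Complex.exp (-(2 * π * n * (α : ℝ)) * Complex.I)‖ := by
  classical
  set g : C(AddCircle (1:ℝ), ℂ) := gfun f with hg
  set U := (fourierBasis (T := (1:ℝ))).repr with hU
  -- the key intertwining identity
  have key : ∀ h : Lp ℂ 2 (haarAddCircle (T := 1)),
      T (U h) = U ((memGH f h).toLp _) := by
    intro h
    apply lp.ext
    funext x
    rw [hT (U h) x]
    have hUh : ∀ y : ℤ, (U h : ∀ _ : ℤ, ℂ) y = fourierCoeff (⇑h) y := fun y =>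
      fourierBasis_repr h y
    have hRHS : (U ((memGH f h).toLp _) : ∀ _ : ℤ, ℂ) x
        = fourierCoeff (fun t => g t * h t) x := by
      rw [fourierBasis_repr]
      unfold fourierCoeff
      refine integral_congr_ae ?_
      filter_upwards [MemLp.coeFn_toLp (memGH f h)] with t ht
      rw [ht]
    rw [hRHS, key_coeff f hf h x]
    have := (Equiv.subLeft x).tsum_eq (fun y => f (x - y) * (U h : ∀ _ : ℤ, ℂ) y)
    rw [← this]
    refine tsum_congr fun n => ?_
    simp only [Equiv.subLeft_apply, sub_sub_cancel, hUh]
  -- upper bound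
  have upper : ‖T‖ ≤ ‖g‖ := by
    refine ContinuousLinearMap.opNorm_le_bound T (norm_nonneg g) fun φ => ?_
    have := key (U.symm φ)
    rw [U.apply_symm_apply] at this
    rw [this, U.norm_map]
    calc ‖(memGH f (U.symm φ)).toLp _‖ ≤ ‖g‖ * ‖U.symm φ‖ := norm_Mg_le f _
      _ = ‖g‖ * ‖φ‖ := by rw [U.symm.norm_map]
  -- lower bound
  have lower : ‖g‖ ≤ ‖T‖ := by
    refine le_of_forall_pos_le_add fun ε hε => ?_
    rcases le_or_gt ‖g‖ ε with hle | hlt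
    · calc ‖g‖ ≤ ε := hle
        _ ≤ ‖T‖ + ε := le_add_of_nonneg_left (norm_nonneg T)
    set c := ‖g‖ - ε with hc
    have hc0 : 0 < c := by simp [hc]; linarith
    set S : Set (AddCircle (1:ℝ)) := {t | c < ‖g t‖} with hS
    have hSopen : IsOpen S := isOpen_lt continuous_const (g.continuous.norm)
    have hSne : S.Nonempty := by
      by_contra hemp
      rw [Set.not_nonempty_iff_eq_empty] at hemp
      have hall : ∀ t, ‖g t‖ ≤ c := by
        intro t
        by_contra hlt'
        have ht : t ∈ S := lt_of_not_ge hlt'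
        rw [hemp] at ht
        exact ht
      have := (ContinuousMap.norm_le g hc0.le).mpr hall
      simp [hc] at this; linarith
    have hμpos : haarAddCircle S ≠ 0 := (hSopen.measure_ne_zero _ hSne)
    have hμtop : haarAddCircle S ≠ ⊤ := measure_ne_top _ _
    set h₀ : Lp ℂ 2 (haarAddCircle (T := 1)) :=
      indicatorConstLp 2 hSopen.measurableSet hμtop (1:ℂ) with hh₀
    have hnorm₀ : 0 < ‖h₀‖ := by
      rw [hh₀, norm_indicatorConstLp (by norm_num) (by norm_num), norm_one, one_mul]
      have : 0 < ((haarAddCircle (T := 1)) S).toReal := ENNReal.toReal_pos hμpos hμtop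
      positivity
    have hgeq := norm_Mg_ge f hSopen.measurableSet hμtop c hc0.le
      (fun t ht => le_of_lt ht)
    have hTle : c * ‖h₀‖ ≤ ‖T‖ * ‖h₀‖ := by
      calc c * ‖h₀‖ ≤ ‖(memGH f h₀).toLp _‖ := hgeq
        _ = ‖U ((memGH f h₀).toLp _)‖ := (U.norm_map _).symm
        _ = ‖T (U h₀)‖ := by rw [key h₀]
        _ ≤ ‖T‖ * ‖U h₀‖ := T.le_opNorm _
        _ = ‖T‖ * ‖h₀‖ := by rw [U.norm_map]
    have := le_of_mul_le_mul_right hTle hnorm₀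
    linarith
  rw [le_antisymm upper lower]
  -- identify the sup with ‖g‖
  have hF : ∀ α : Set.Ico (0:ℝ) 1,
      (∑' n : ℤ, f n * Complex.exp (-(2 * π * n * (α : ℝ)) * Complex.I))
        = g ((((-(α : ℝ) : ℝ)) : AddCircle (1:ℝ))) := by
    intro α
    rw [hg, gfun_apply f hf]
    refine tsum_congr fun n => ?_
    congr 1
    rw [fourier_coe_apply]
    congr 1
    push_cast
    ring
  have hrange : Set.range (fun α : Set.Ico (0:ℝ) 1 => ‖g ((((-(α : ℝ) : ℝ)) : AddCircle (1:ℝ)))‖)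
      = Set.range (fun θ : AddCircle (1:ℝ) => ‖g θ‖) := by
    apply Set.eq_of_subset_of_subset
    · rintro r ⟨α, rfl⟩
      exact ⟨_, rfl⟩
    · rintro r ⟨θ, rfl⟩
      induction θ using QuotientAddGroup.induction_on with
      | H x =>
        refine ⟨⟨Int.fract (-x), ⟨Int.fract_nonneg _, Int.fract_lt_one _⟩⟩, ?_⟩
        simp only
        congr 1
        have : -Int.fract (-x) = x + (⌊-x⌋ : ℝ) := by
          rw [Int.fract]; ring
        rw [this]
        have hz : (((⌊-x⌋ : ℝ)) : AddCircle (1:ℝ)) = 0 := by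
          rw [AddCircle.coe_eq_zero_iff]
          exact ⟨⌊-x⌋, by simp⟩
        rw [AddCircle.coe_add, hz, add_zero]
  calc ‖g‖ = ⨆ θ : AddCircle (1:ℝ), ‖g θ‖ := g.norm_eq_iSup_norm
    _ = ⨆ α : Set.Ico (0:ℝ) 1, ‖g ((((-(α : ℝ) : ℝ)) : AddCircle (1:ℝ)))‖ := by
        rw [← sSup_range, ← sSup_range, hrange]
    _ = ⨆ α : Set.Ico (0:ℝ) 1,
        ‖∑' n : ℤ, f n * Complex.exp (-(2 * π * n * (α : ℝ)) * Complex.I)‖ := by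
        refine iSup_congr fun α => ?_
        rw [hF α]

end Main
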